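/- Let K be a field and A an n×n matrix over the polynomial ring K[α₁, α₂] such that every diagonal entry A[i,i] equals α₁, for some fixed k with 1 ≤ k ≤ n−1 every entry A[i,i+k] equals α₂, and all other entries lie in K. Then det(A) = α₁ⁿ + Q(α₁, α₂), where Q ∈ K[α₁, α₂] has total degree at most n−1. -/
import Mathlib


open MvPolynomial

/-- Pham-type diagonal lemma: an `n × n` matrix over `K[α₁, α₂]` with `α₁` on the
diagonal, `α₂` on a fixed `k`-th superdiagonal, and constants from `K` elsewhere,
has determinant `α₁ ^ n + Q` with `Q` of total degree at most `n - 1`. -/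
theorem stmt0 (K : Type*) [Field K] (n k : ℕ) (hk1 : 1 ≤ k) (hkn : k ≤ n - 1)
    (A : Matrix (Fin n) (Fin n) (MvPolynomial (Fin 2) K))
    (hdiag : ∀ i, A i i = X 0)
    (hsuper : ∀ i j : Fin n, (j : ℕ) = (i : ℕ) + k → A i j = X 1)
    (hconst : ∀ i j : Fin n, (j : ℕ) ≠ (i : ℕ) → (j : ℕ) ≠ (i : ℕ) + k →
      ∃ c : K, A i j = C c) :
    ∃ Q : MvPolynomial (Fin 2) K,
      A.det = (X 0) ^ n + Q ∧ Q.totalDegree ≤ n - 1 := by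
  classical
  have hdeg1 : ∀ i j : Fin n, (A i j).totalDegree ≤ 1 := by
    intro i j
    by_cases h1 : (j : ℕ) = (i : ℕ)
    · have hji : j = i := Fin.ext h1
      rw [hji, hdiag, totalDegree_X]
    by_cases h2 : (j : ℕ) = (i : ℕ) + k
    · rw [hsuper i j h2, totalDegree_X]
    obtain ⟨c, hc⟩ := hconst i j h1 h2
    rw [hc, totalDegree_C]
    exact Nat.zero_le 1
  refine ⟨∑ σ ∈ Finset.univ.erase (1 : Equiv.Perm (Fin n)),
      Equiv.Perm.sign σ • ∏ i, A (σ i) i, ?_, ?_⟩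
  · rw [Matrix.det_apply,
      ← Finset.add_sum_erase _ _ (Finset.mem_univ (1 : Equiv.Perm (Fin n)))]
    congr 1
    simp [hdiag, Finset.prod_const]
  · refine (totalDegree_finset_sum _ _).trans (Finset.sup_le ?_)
    intro σ hσ
    have hσ1 : σ ≠ 1 := (Finset.mem_erase.mp hσ).1
    -- bound the smul by the product's total degree
    have hsmul : (Equiv.Perm.sign σ • ∏ i, A (σ i) i).totalDegree
        ≤ (∏ i, A (σ i) i).totalDegree := by
      rcases Int.units_eq_one_or (Equiv.Perm.sign σ) with h | h
      · rw [h, one_smul]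
      · rw [h, Units.smul_def]
        simp only [Units.val_neg, Units.val_one, neg_smul, one_smul]
        rw [totalDegree_neg]
    refine hsmul.trans ?_
    -- there exists an index where the entry is a constant
    have hex : ∃ i : Fin n, ∃ c : K, A (σ i) i = C c := by
      by_contra h
      push_neg at h
      have hcases : ∀ i : Fin n, ((σ i : ℕ) = (i : ℕ)) ∨ ((i : ℕ) = (σ i : ℕ) + k) := by
        intro i
        by_contra hc
        push_neg at hc
        obtain ⟨c, hcc⟩ := hconst (σ i) i (fun e => hc.1 e.symm) hc.2
        exact h i c hcc
      have hle : ∀ i : Fin n, (σ i : ℕ) ≤ (i : ℕ) := by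
        intro i; rcases hcases i with h' | h' <;> omega
      have hlt : ∃ i : Fin n, (σ i : ℕ) < (i : ℕ) := by
        have : ∃ i, σ i ≠ i := by
          by_contra hall
          push_neg at hall
          exact hσ1 (Equiv.ext hall)
        obtain ⟨i, hi⟩ := this
        exact ⟨i, lt_of_le_of_ne (hle i) (fun e => hi (Fin.ext e))⟩
      obtain ⟨i, hi⟩ := hlt
      have hsum : ∑ j : Fin n, ((σ j : ℕ)) = ∑ j : Fin n, (j : ℕ) :=
        Equiv.sum_comp σ (fun j : Fin n => (j : ℕ))
      have := Finset.sum_lt_sum (fun j (_ : j ∈ Finset.univ) => hle j)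
        ⟨i, Finset.mem_univ i, hi⟩
      omega
    obtain ⟨i0, c0, hc0⟩ := hex
    calc (∏ i, A (σ i) i).totalDegree
        ≤ ∑ i, (A (σ i) i).totalDegree := totalDegree_finset_prod _ _
      _ = (A (σ i0) i0).totalDegree
            + ∑ i ∈ Finset.univ.erase i0, (A (σ i) i).totalDegree :=
          (Finset.add_sum_erase _ _ (Finset.mem_univ i0)).symm
      _ ≤ 0 + ∑ i ∈ Finset.univ.erase i0, 1 := by
          refine add_le_add ?_ (Finset.sum_le_sum fun i _ => hdeg1 _ _)
          rw [hc0, totalDegree_C]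
      _ = (Finset.univ.erase i0).card := by simp
      _ = n - 1 := by
          rw [Finset.card_erase_of_mem (Finset.mem_univ i0), Finset.card_univ,
            Fintype.card_fin]
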